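/- The Jaccard index J(A,B) = |A ∩ B| / |A ∪ B| (with J(∅,∅) defined to be 1) is a positive definite kernel on the family of finite subsets of a set X. -/

import Mathlib

/-- The Jaccard index on finite subsets, with `J(∅,∅) = 1`. -/
noncomputable def jaccard {X : Type*} [DecidableEq X] (A B : Finset X) : ℝ :=
  if A ∪ B = ∅ then 1 else ((A ∩ B).card : ℝ) / ((A ∪ B).card : ℝ)

open Finset Equiv
variable {N : ℕ}

lemma image_swap_self {x y : Fin N} {S : Finset (Fin N)} (hx : x ∈ S) (hy : y ∈ S) :
    S.image (swap x y) = S := by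
  ext z
  simp only [mem_image]
  constructor
  · rintro ⟨a, ha, rfl⟩
    rcases eq_or_ne a x with rfl|hax
    · simpa using hy
    rcases eq_or_ne a y with rfl|hay
    · simpa using hx
    · rwa [swap_apply_of_ne_of_ne hax hay]
  · intro hz
    rcases eq_or_ne z x with rfl|hzx
    · exact ⟨y, hy, swap_apply_right _ _⟩
    rcases eq_or_ne z y with rfl|hzy
    · exact ⟨x, hx, swap_apply_left _ _⟩
    · exact ⟨z, hz, swap_apply_of_ne_of_ne hzx hzy⟩

-- minimum under a permutation
noncomputable def mmin (e : Perm (Fin N)) (A : Finset (Fin N)) : WithTop (Fin N) :=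
  (A.image e).min

-- uniform: count of perms with min at x equals count at y
lemma count_eq {S : Finset (Fin N)} {x y : Fin N} (hx : x ∈ S) (hy : y ∈ S) :
    (univ.filter (fun e : Perm (Fin N) => mmin e S = (e x : WithTop (Fin N)))).card =
    (univ.filter (fun e : Perm (Fin N) => mmin e S = (e y : WithTop (Fin N)))).card := by
  classical
  apply Finset.card_bij' (fun e _ => e * swap x y) (fun e _ => e * swap x y)
  · intro e he
    simp only [mem_filter, mem_univ, true_and] at he ⊢
    have himg : S.image (e * swap x y) = S.image e := by
      rw [show ((e * swap x y : Perm (Fin N)) : Fin N → Fin N) = e ∘ (swap x y) from rfl,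
        ← Finset.image_image, image_swap_self hx hy]
    simp only [mmin, himg]
    simpa [Perm.mul_apply, mmin] using he
  · intro e he
    simp only [mem_filter, mem_univ, true_and] at he ⊢
    have himg : S.image (e * swap x y) = S.image e := by
      rw [show ((e * swap x y : Perm (Fin N)) : Fin N → Fin N) = e ∘ (swap x y) from rfl,
        ← Finset.image_image, image_swap_self hx hy]
    simp only [mmin, himg]
    simpa [Perm.mul_apply, mmin] using he
  · intro e _; simp [mul_assoc]
  · intro e _; simp [mul_assoc]

lemma sum_indicator_one (e : Perm (Fin N)) {S : Finset (Fin N)} (hS : S.Nonempty) :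
    (S.filter (fun x => mmin e S = (e x : WithTop (Fin N)))).card = 1 := by
  classical
  obtain ⟨m, hm, hmin⟩ : ∃ m ∈ S.image e, (S.image e).min = m := by
    obtain ⟨m, hm⟩ := Finset.min_of_nonempty (hS.image e)
    exact ⟨m, Finset.mem_of_min hm, hm⟩
  obtain ⟨x0, hx0, rfl⟩ := Finset.mem_image.1 hm
  rw [Finset.card_eq_one]
  refine ⟨x0, ?_⟩
  ext z
  simp only [mem_filter, mem_singleton, mmin, hmin]
  constructor
  · rintro ⟨hz, h⟩
    exact e.injective (by exact_mod_cast h.symm)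
  · rintro rfl; exact ⟨hx0, rfl⟩

lemma count_mul_card {S : Finset (Fin N)} {x : Fin N} (hx : x ∈ S) :
    (univ.filter (fun e : Perm (Fin N) => mmin e S = (e x : WithTop (Fin N)))).card * S.card
      = Nat.factorial N := by
  classical
  have key : ∑ y ∈ S, (univ.filter (fun e : Perm (Fin N) =>
      mmin e S = (e y : WithTop (Fin N)))).card = Nat.factorial N := by
    have : ∑ y ∈ S, (univ.filter (fun e : Perm (Fin N) =>
        mmin e S = (e y : WithTop (Fin N)))).card
        = ∑ e : Perm (Fin N), (S.filter (fun y => mmin e S = (e y : WithTop (Fin N)))).card := by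
      simp only [Finset.card_filter]
      rw [Finset.sum_comm]
    rw [this]
    have hS : S.Nonempty := ⟨x, hx⟩
    simp only [sum_indicator_one _ hS]
    simp [Fintype.card_perm]
  calc (univ.filter (fun e : Perm (Fin N) => mmin e S = (e x : WithTop (Fin N)))).card * S.card
      = ∑ y ∈ S, (univ.filter (fun e : Perm (Fin N) =>
          mmin e S = (e x : WithTop (Fin N)))).card := by rw [Finset.sum_const, smul_eq_mul, mul_comm]
    _ = ∑ y ∈ S, (univ.filter (fun e : Perm (Fin N) =>
          mmin e S = (e y : WithTop (Fin N)))).card := Finset.sum_congr rfl fun y hy => count_eq hx hy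
    _ = Nat.factorial N := key

lemma mmin_union (e : Perm (Fin N)) (A B : Finset (Fin N)) :
    mmin e (A ∪ B) = mmin e A ⊓ mmin e B := by
  simp only [mmin, Finset.image_union]
  convert Finset.min_union (s := A.image e) (t := B.image e) using 3

lemma cond_iff {e : Perm (Fin N)} {A B : Finset (Fin N)} (hAB : A ∪ B ≠ ∅) :
    mmin e A = mmin e B ↔ ∃ x ∈ A ∩ B, mmin e (A ∪ B) = (e x : WithTop (Fin N)) := by
  constructor
  · intro h
    have hA : A.Nonempty := by
      rcases A.eq_empty_or_nonempty with rfl|h'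
      · exfalso
        have : mmin e B = ⊤ := by simpa [mmin] using h.symm
        have hB : B = ∅ := by
          have := Finset.min_eq_top.1 this
          simpa using this
        simp [hB] at hAB
      · exact h'
    obtain ⟨m, hmmem, hmin⟩ : ∃ m ∈ A.image e, (A.image e).min = m := by
      obtain ⟨m, hm⟩ := Finset.min_of_nonempty (hA.image e)
      exact ⟨m, Finset.mem_of_min hm, hm⟩
    obtain ⟨x, hxA, rfl⟩ := Finset.mem_image.1 hmmem
    have hxB : x ∈ B := by
      have hB : (B.image e).min = (e x : WithTop (Fin N)) := by
        show mmin e B = _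
        rw [← h]
        exact hmin
      obtain ⟨z, hz, hez⟩ := Finset.mem_image.1 (Finset.mem_of_min hB)
      rwa [← e.injective hez]
    refine ⟨x, Finset.mem_inter.2 ⟨hxA, hxB⟩, ?_⟩
    rw [mmin_union, ← h]
    simp [mmin, hmin]
  · rintro ⟨x, hx, hmin⟩
    rw [mmin_union] at hmin
    rw [Finset.mem_inter] at hx
    have h1 : mmin e A ≤ (e x : WithTop (Fin N)) :=
      Finset.min_le (Finset.mem_image_of_mem e hx.1)
    have h2 : mmin e B ≤ (e x : WithTop (Fin N)) :=
      Finset.min_le (Finset.mem_image_of_mem e hx.2)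
    have h3 : (e x : WithTop (Fin N)) ≤ mmin e A := hmin ▸ inf_le_left
    have h4 : (e x : WithTop (Fin N)) ≤ mmin e B := hmin ▸ inf_le_right
    rw [le_antisymm h1 h3, le_antisymm h2 h4]

lemma pair_count (A B : Finset (Fin N)) :
    (univ.filter (fun e : Perm (Fin N) => mmin e A = mmin e B)).card * (A ∪ B).card
      = Nat.factorial N * (A ∩ B).card := by
  classical
  rcases eq_or_ne (A ∪ B) ∅ with h|h
  · have hA : A = ∅ := by simpa using (Finset.union_eq_empty.1 h).1
    have hB : B = ∅ := by simpa using (Finset.union_eq_empty.1 h).2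
    simp [hA, hB]
  · have hset : univ.filter (fun e : Perm (Fin N) => mmin e A = mmin e B)
        = (A ∩ B).biUnion (fun x => univ.filter
            (fun e : Perm (Fin N) => mmin e (A ∪ B) = (e x : WithTop (Fin N)))) := by
      ext e
      simp only [mem_filter, mem_univ, true_and, mem_biUnion]
      exact cond_iff h
    have hdisj : ∀ x ∈ A ∩ B, ∀ y ∈ A ∩ B, x ≠ y → Disjoint
        (univ.filter (fun e : Perm (Fin N) => mmin e (A ∪ B) = (e x : WithTop (Fin N))))
        (univ.filter (fun e : Perm (Fin N) => mmin e (A ∪ B) = (e y : WithTop (Fin N)))) := by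
      intro x _ y _ hxy
      rw [Finset.disjoint_left]
      intro e he1 he2
      simp only [mem_filter, mem_univ, true_and] at he1 he2
      apply hxy
      apply e.injective
      exact_mod_cast he1.symm.trans he2
    rw [hset, Finset.card_biUnion hdisj, Finset.sum_mul]
    have : ∀ x ∈ A ∩ B, (univ.filter
        (fun e : Perm (Fin N) => mmin e (A ∪ B) = (e x : WithTop (Fin N)))).card * (A ∪ B).card
        = Nat.factorial N := by
      intro x hx
      exact count_mul_card (Finset.mem_union_left _ (Finset.mem_inter.1 hx).1)
    rw [Finset.sum_congr rfl this, Finset.sum_const, smul_eq_mul, mul_comm]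

lemma jaccard_count (A B : Finset (Fin N)) :
    jaccard A B = ((univ.filter (fun e : Perm (Fin N) => mmin e A = mmin e B)).card : ℝ)
      / (Nat.factorial N : ℝ) := by
  classical
  have hfpos : (0 : ℝ) < (Nat.factorial N : ℝ) := by exact_mod_cast Nat.factorial_pos N
  rcases eq_or_ne (A ∪ B) ∅ with h|h
  · have hA : A = ∅ := by simpa using (Finset.union_eq_empty.1 h).1
    have hB : B = ∅ := by simpa using (Finset.union_eq_empty.1 h).2
    subst hA; subst hB
    have h1 : jaccard (∅ : Finset (Fin N)) ∅ = 1 := by simp [jaccard]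
    have h2 : univ.filter (fun e : Perm (Fin N) => mmin e (∅ : Finset (Fin N)) = mmin e ∅)
        = univ := Finset.filter_true_of_mem (fun _ _ => rfl)
    rw [h1, h2, Finset.card_univ, Fintype.card_perm, Fintype.card_fin]
    rw [eq_comm, div_eq_one_iff_eq (ne_of_gt hfpos)]
  · have hcard : (A ∪ B).card ≠ 0 := by simp [Finset.card_eq_zero, h]
    have := pair_count A B
    rw [jaccard, if_neg h]
    have hreal : ((univ.filter (fun e : Perm (Fin N) => mmin e A = mmin e B)).card : ℝ)
        * ((A ∪ B).card : ℝ) = (Nat.factorial N : ℝ) * ((A ∩ B).card : ℝ) := by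
      exact_mod_cast this
    have hc : ((A ∪ B).card : ℝ) ≠ 0 := by exact_mod_cast hcard
    field_simp
    linarith [hreal]

instance {N : ℕ} : Fintype (WithTop (Fin N)) := inferInstanceAs (Fintype (Option (Fin N)))

lemma psd_fin {N n : ℕ} (B : Fin n → Finset (Fin N)) (c : Fin n → ℝ) :
    0 ≤ ∑ i, ∑ j, c i * c j * jaccard (B i) (B j) := by
  classical
  have expand : ∀ e : Perm (Fin N),
      ∑ v : WithTop (Fin N), (∑ i, if mmin e (B i) = v then c i else 0) ^ 2
      = ∑ i, ∑ j, if mmin e (B i) = mmin e (B j) then c i * c j else 0 := by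
    intro e
    have h1 : ∀ v : WithTop (Fin N), (∑ i, if mmin e (B i) = v then c i else 0) ^ 2
        = ∑ i, ∑ j, (if mmin e (B i) = v then c i else 0) *
            (if mmin e (B j) = v then c j else 0) := by
      intro v
      rw [sq, Finset.sum_mul_sum]
    simp only [h1]
    rw [Finset.sum_comm]
    refine Finset.sum_congr rfl fun i _ => ?_
    rw [Finset.sum_comm]
    refine Finset.sum_congr rfl fun j _ => ?_
    rcases eq_or_ne (mmin e (B i)) (mmin e (B j)) with h|h
    · rw [if_pos h, h]
      have h2 : ∀ v : WithTop (Fin N),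
          (if mmin e (B j) = v then c i else 0) * (if mmin e (B j) = v then c j else 0)
          = if mmin e (B j) = v then c i * c j else 0 := by
        intro v
        by_cases hv : mmin e (B j) = v <;> simp [hv]
      simp only [h2]
      rw [Finset.sum_ite_eq]
      simp
    · rw [if_neg h]
      apply Finset.sum_eq_zero
      intro v _
      by_cases h1 : mmin e (B i) = v
      · have h2 : ¬ (mmin e (B j) = v) := fun hc => h (h1.trans hc.symm)
        simp [h1, h2]
      · simp [h1]
  have step1 : ∀ i j : Fin n, c i * c j * jaccard (B i) (B j)
      = (∑ e : Perm (Fin N), if mmin e (B i) = mmin e (B j) then c i * c j else 0)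
        / (Nat.factorial N : ℝ) := by
    intro i j
    rw [jaccard_count]
    have : (∑ e : Perm (Fin N), if mmin e (B i) = mmin e (B j) then c i * c j else 0)
        = ((univ.filter fun e : Perm (Fin N) => mmin e (B i) = mmin e (B j)).card : ℝ)
          * (c i * c j) := by
      rw [← Finset.sum_filter, Finset.sum_const, nsmul_eq_mul]
    rw [this]
    ring
  have key : ∑ i, ∑ j, c i * c j * jaccard (B i) (B j)
      = (∑ e : Perm (Fin N), ∑ v : WithTop (Fin N),
          (∑ i, if mmin e (B i) = v then c i else 0) ^ 2) / (Nat.factorial N : ℝ) := by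
    simp only [step1]
    simp only [← Finset.sum_div]
    congr 1
    simp only [expand]
    have hcomm : ∀ i : Fin n, ∑ j : Fin n, ∑ e : Perm (Fin N),
        (if mmin e (B i) = mmin e (B j) then c i * c j else 0)
        = ∑ e : Perm (Fin N), ∑ j : Fin n,
        (if mmin e (B i) = mmin e (B j) then c i * c j else 0) :=
      fun i => Finset.sum_comm
    simp only [hcomm]
    exact Finset.sum_comm
  rw [key]
  apply div_nonneg
  · apply Finset.sum_nonneg
    intro e _
    apply Finset.sum_nonneg
    intro v _
    positivity
  · positivity

lemma jaccard_congr {X Y : Type*} [DecidableEq X] [DecidableEq Y]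
    {A B : Finset X} {A' B' : Finset Y}
    (h1 : (A ∩ B).card = (A' ∩ B').card) (h2 : (A ∪ B).card = (A' ∪ B').card) :
    jaccard A B = jaccard A' B' := by
  unfold jaccard
  rw [h1, h2]
  by_cases h : A ∪ B = ∅
  · rw [if_pos h, if_pos]
    rw [← Finset.card_eq_zero, ← h2, Finset.card_eq_zero.2 h]
  · rw [if_neg h, if_neg]
    rw [← Finset.card_eq_zero, ← h2]
    exact fun hc => h (Finset.card_eq_zero.1 hc)


/-- The Jaccard index is a positive definite kernel on the family of finite subsets. -/
theorem jaccard_posdef {X : Type*} [DecidableEq X] :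
    (∀ A B : Finset X, jaccard A B = jaccard B A) ∧
    (∀ (n : ℕ) (A : Fin n → Finset X) (c : Fin n → ℝ),
      0 ≤ ∑ i, ∑ j, c i * c j * jaccard (A i) (A j)) := by
  constructor
  · intro A B
    unfold jaccard
    rw [Finset.union_comm, Finset.inter_comm]
  · intro n A c
    classical
    set U : Finset X := Finset.univ.biUnion A with hU
    set N : ℕ := U.card with hN
    set g : Fin N → X := fun k => ((U.equivFin.symm k : U) : X) with hg
    have hg_inj : Function.Injective g := by
      intro a b hab
      have : U.equivFin.symm a = U.equivFin.symm b := Subtype.ext hab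
      exact U.equivFin.symm.injective this
    have hsub : ∀ i, A i ⊆ U := fun i x hx =>
      Finset.mem_biUnion.2 ⟨i, Finset.mem_univ i, hx⟩
    have hcards : ∀ S : Finset X, S ⊆ U →
        (univ.filter (fun k : Fin N => g k ∈ S)).card = S.card := by
      intro S hS
      apply Finset.card_bij (fun k _ => g k)
      · intro k hk
        exact (Finset.mem_filter.1 hk).2
      · intro a ha b hb hab
        exact hg_inj hab
      · intro x hx
        refine ⟨U.equivFin ⟨x, hS hx⟩, ?_, ?_⟩
        · simp only [Finset.mem_filter, Finset.mem_univ, true_and, hg]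
          rw [Equiv.symm_apply_apply]
          exact hx
        · simp only [hg]
          rw [Equiv.symm_apply_apply]
    set B : Fin n → Finset (Fin N) := fun i => univ.filter (fun k => g k ∈ A i) with hB
    have heq : ∀ i j, jaccard (B i) (B j) = jaccard (A i) (A j) := by
      intro i j
      apply jaccard_congr
      · have hset : B i ∩ B j = univ.filter (fun k => g k ∈ A i ∩ A j) := by
          ext k
          simp [hB, Finset.mem_inter, and_and_left, and_assoc]
        rw [hset, hcards _ (fun x hx => hsub i (Finset.mem_inter.1 hx).1)]
      · have hset : B i ∪ B j = univ.filter (fun k => g k ∈ A i ∪ A j) := by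
          ext k
          simp [hB, Finset.mem_union]
        rw [hset, hcards _ (Finset.union_subset (hsub i) (hsub j))]
    have h := psd_fin B c
    simpa only [heq] using h
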